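/- Equality in the bound ∏_{1≤j<k≤d} sin²(y_j − y_k) ≤ 2^(−d(d−1)) d^d, for y₁,…,y_d ∈ [0,π), holds if and only if the set {y₁,…,y_d} is an arithmetic progression with common difference π/d. -/

import Mathlib

open Real Finset Matrix
open scoped ComplexOrder

noncomputable def zf (d : ℕ) (y : Fin d → ℝ) : Fin d → ℂ :=
  fun j => Complex.exp (2 * y j * Complex.I)

lemma prod_pairs {M : Type*} [CommMonoid M] (d : ℕ) (g : Fin d × Fin d → M) :
    ∏ p ∈ Finset.univ.filter (fun p : Fin d × Fin d => p.1 < p.2), g p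
      = ∏ i, ∏ j ∈ Finset.Ioi i, g (i, j) := by
  rw [Finset.prod_sigma']
  exact Finset.prod_nbij' (fun p => ⟨p.1, p.2⟩) (fun p => (p.1, p.2))
    (by simp) (by simp [Finset.mem_Ioi]) (by simp) (by simp) (by simp)

lemma abs_exp_sub (u v : ℝ) :
    ‖Complex.exp (2 * u * Complex.I) - Complex.exp (2 * v * Complex.I)‖ ^ 2
      = 4 * Real.sin (u - v) ^ 2 := by
  have h : ∀ t : ℝ, Complex.exp (2 * t * Complex.I)
      = Complex.ofReal (Real.cos (2*t)) + Complex.ofReal (Real.sin (2*t)) * Complex.I := by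
    intro t
    rw [show (2 * (t:ℂ) * Complex.I) = ((2*t : ℝ) : ℂ) * Complex.I by push_cast; ring,
      Complex.exp_mul_I, Complex.ofReal_cos, Complex.ofReal_sin]
  rw [h, h, Complex.sq_norm, Complex.normSq_apply]
  simp only [Complex.sub_re, Complex.add_re, Complex.ofReal_re, Complex.mul_re, Complex.I_re,
    Complex.I_im, Complex.ofReal_im, Complex.sub_im, Complex.add_im, Complex.mul_im]
  have hc := Real.cos_sub (2*u) (2*v)
  have hs : Real.cos (2*u - 2*v) = 1 - 2 * Real.sin (u - v) ^2 := by
    rw [show 2*u - 2*v = 2*(u-v) by ring, Real.cos_two_mul']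
    have := Real.sin_sq_add_cos_sq (u - v); nlinarith
  nlinarith [Real.sin_sq_add_cos_sq (2*u), Real.sin_sq_add_cos_sq (2*v)]

lemma amgm_eq {n : ℕ} (t : ℝ) (ht : 0 < t) (lam : Fin n → ℝ) (h0 : ∀ i, 0 ≤ lam i)
    (hsum : ∑ i, lam i = n * t) (hprod : ∏ i, lam i = t ^ n) : ∀ i, lam i = t := by
  have hpos : ∀ i, 0 < lam i := by
    intro i
    rcases (h0 i).lt_or_eq with h | h
    · exact h
    · exfalso
      have : (∏ i, lam i) = 0 := Finset.prod_eq_zero (Finset.mem_univ i) h.symm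
      rw [hprod] at this
      exact absurd this (pow_ne_zero _ ht.ne')
  by_contra hcon
  push_neg at hcon
  obtain ⟨j, hj⟩ := hcon
  have hle : ∀ i ∈ Finset.univ, lam i / t ≤ Real.exp (lam i / t - 1) := by
    intro i _
    have := Real.add_one_le_exp (lam i / t - 1)
    linarith
  have hlt : ∏ i, (lam i / t) < ∏ i, Real.exp (lam i / t - 1) := by
    apply Finset.prod_lt_prod (fun i _ => div_pos (hpos i) ht) hle
    refine ⟨j, Finset.mem_univ j, ?_⟩
    have := Real.add_one_lt_exp (x := lam j / t - 1) (by
      intro h; apply hj; field_simp at h; linarith)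
    linarith
  rw [← Real.exp_sum] at hlt
  have h1 : ∑ i, (lam i / t - 1) = 0 := by
    rw [Finset.sum_sub_distrib, ← Finset.sum_div, hsum]
    field_simp
    simp
  have h2 : ∏ i, (lam i / t) = 1 := by
    rw [Finset.prod_div_distrib, hprod, Finset.prod_const]
    field_simp
    simp
  rw [h1, h2, Real.exp_zero] at hlt
  exact lt_irrefl _ hlt

lemma gram_entry {d : ℕ} (z : Fin d → ℂ) (j l : Fin d) :
    (Matrix.vandermonde z * (Matrix.vandermonde z)ᴴ) j l
      = ∑ i ∈ Finset.range d, (z j * (starRingEnd ℂ) (z l)) ^ i := by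
  rw [Matrix.mul_apply, ← Fin.sum_univ_eq_sum_range]
  congr 1; ext k
  simp [Matrix.conjTranspose_apply, Matrix.vandermonde, mul_pow, map_pow]

lemma zf_abs (d : ℕ) (y : Fin d → ℝ) (j : Fin d) : ‖zf d y j‖ = 1 := by
  unfold zf
  rw [Complex.norm_exp]
  simp

lemma zf_mul_conj_self (d : ℕ) (y : Fin d → ℝ) (j : Fin d) :
    zf d y j * (starRingEnd ℂ) (zf d y j) = 1 := by
  rw [Complex.mul_conj, Complex.normSq_eq_norm_sq, zf_abs, one_pow, Complex.ofReal_one]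

lemma zf_mul_conj (d : ℕ) (y : Fin d → ℝ) (j l : Fin d) :
    zf d y j * (starRingEnd ℂ) (zf d y l)
      = Complex.exp ((2*(y j - y l) : ℝ) * Complex.I) := by
  unfold zf
  rw [← Complex.exp_conj, ← Complex.exp_add]
  congr 1
  simp only [_root_.map_mul, Complex.conj_ofReal, Complex.conj_I, map_ofNat]
  push_cast
  ring

lemma real_eq_of_mul_I {a b : ℝ} (h : (a:ℂ) * Complex.I = (b:ℂ) * Complex.I) : a = b := by
  have := mul_right_cancel₀ Complex.I_ne_zero h
  exact_mod_cast this

lemma lemA (d : ℕ) (hd : 1 ≤ d) (y : Fin d → ℝ) :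
    ‖(Matrix.vandermonde (zf d y)).det‖ ^ 2
      = 2 ^ (d * (d-1)) *
        ∏ p ∈ Finset.univ.filter (fun p : Fin d × Fin d => p.1 < p.2),
          Real.sin (y p.1 - y p.2) ^ 2 := by
  rw [prod_pairs d (fun p => Real.sin (y p.1 - y p.2) ^ 2)]
  have step1 : ‖(Matrix.vandermonde (zf d y)).det‖ ^ 2
      = ∏ i, ∏ j ∈ Finset.Ioi i, (4 * Real.sin (y i - y j) ^ 2) := by
    rw [Matrix.det_vandermonde, norm_prod, ← Finset.prod_pow]
    refine Finset.prod_congr rfl fun i _ => ?_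
    rw [norm_prod, ← Finset.prod_pow]
    refine Finset.prod_congr rfl fun j _ => ?_
    rw [show zf d y j - zf d y i
        = Complex.exp (2 * (y j) * Complex.I) - Complex.exp (2 * (y i) * Complex.I) from rfl]
    rw [abs_exp_sub (y j) (y i), show y j - y i = -(y i - y j) by ring, Real.sin_neg, neg_sq]
  rw [step1]
  have step2 : (∏ i, ∏ j ∈ Finset.Ioi i, (4 * Real.sin (y i - y j) ^ 2))
      = (4:ℝ) ^ (∑ i : Fin d, (Finset.Ioi i).card)
        * ∏ i, ∏ j ∈ Finset.Ioi i, Real.sin (y i - y j) ^ 2 := by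
    rw [← Finset.prod_pow_eq_pow_sum, ← Finset.prod_mul_distrib]
    refine Finset.prod_congr rfl fun i _ => ?_
    rw [Finset.prod_mul_distrib, Finset.prod_const]
  rw [step2]
  congr 1
  have hK : (∑ i : Fin d, (Finset.Ioi i).card) * 2 = d * (d-1) := by
    have h1 : (∑ i : Fin d, (Finset.Ioi i).card) = ∑ i ∈ Finset.range d, (d - 1 - i) := by
      rw [← Fin.sum_univ_eq_sum_range (fun i => d - 1 - i) d]
      refine Finset.sum_congr rfl fun i _ => ?_
      rw [Fin.card_Ioi]
    rw [h1]
    have h2 := Finset.sum_range_reflect (fun i => i) d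
    rw [h2]
    exact Finset.sum_range_id_mul_two d
  rw [show (4:ℝ) = 2^2 by norm_num, ← pow_mul]
  congr 1
  omega

lemma absdet_of_gram {d : ℕ} (z : Fin d → ℂ)
    (hG : Matrix.vandermonde z * (Matrix.vandermonde z)ᴴ = (d:ℂ) • 1) :
    ‖(Matrix.vandermonde z).det‖ ^ 2 = (d:ℝ) ^ d := by
  set M := Matrix.vandermonde z
  refine Complex.ofReal_inj.mp ?_
  calc ((‖M.det‖ ^ 2 : ℝ) : ℂ)
      = (Complex.normSq M.det : ℂ) := by rw [Complex.normSq_eq_norm_sq]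
    _ = M.det * (starRingEnd ℂ) M.det := (Complex.mul_conj _).symm
    _ = (M * Mᴴ).det := by
        rw [Matrix.det_mul, Matrix.det_conjTranspose]; rfl
    _ = ((d:ℂ) • (1 : Matrix (Fin d) (Fin d) ℂ)).det := by rw [hG]
    _ = ((d:ℝ)^d : ℝ) := by
        rw [Matrix.det_smul, Matrix.det_one, mul_one, Fintype.card_fin]
        push_cast
        rfl
lemma forward_gram {d : ℕ} (hd : 2 ≤ d) (z : Fin d → ℂ) (hz : ∀ j, ‖z j‖ = 1)
    (hdet : ‖(Matrix.vandermonde z).det‖ ^ 2 = (d:ℝ) ^ d) :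
    Matrix.vandermonde z * (Matrix.vandermonde z)ᴴ = (d : ℂ) • 1 := by
  set M := Matrix.vandermonde z with hM
  set G := M * Mᴴ with hGdef
  have hpsd : G.PosSemidef := Matrix.posSemidef_self_mul_conjTranspose M
  have hH : G.IsHermitian := hpsd.1
  have hone : ∀ j, z j * (starRingEnd ℂ) (z j) = 1 := by
    intro j
    rw [Complex.mul_conj, Complex.normSq_eq_norm_sq, hz, one_pow, Complex.ofReal_one]
  have hdiag : ∀ j, G j j = (d : ℂ) := by
    intro j
    rw [hGdef, hM, gram_entry, Finset.sum_congr rfl (fun i _ => by rw [hone, one_pow])]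
    simp
  have htr : G.trace = (d : ℂ) * d := by
    rw [Matrix.trace]
    simp only [Matrix.diag]
    rw [Finset.sum_congr rfl (fun i _ => hdiag i)]
    simp [mul_comm]
  have hdetG : G.det = Complex.ofReal ((d:ℝ) ^ d) := by
    rw [hGdef, Matrix.det_mul, Matrix.det_conjTranspose, Complex.star_def, Complex.mul_conj,
      Complex.normSq_eq_norm_sq, hdet]
  set lam := hH.eigenvalues with hlamdef
  have hprodlam : ∏ i, lam i = (d:ℝ) ^ d := by
    have h1 := hH.det_eq_prod_eigenvalues
    rw [hlamdef]
    simp only [show ∀ x:ℝ, (RCLike.ofReal x:ℂ) = Complex.ofReal x from fun _ => rfl] at h1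
    refine Complex.ofReal_inj.mp ?_
    push_cast
    rw [← h1, hdetG]
    push_cast
    ring
  have hU : (Matrix.IsHermitian.eigenvectorUnitary hH : Matrix (Fin d) (Fin d) ℂ) *
      star (Matrix.IsHermitian.eigenvectorUnitary hH : Matrix (Fin d) (Fin d) ℂ) = 1 :=
    (Matrix.mem_unitaryGroup_iff).mp (Matrix.IsHermitian.eigenvectorUnitary hH).2
  have hU' : star (Matrix.IsHermitian.eigenvectorUnitary hH : Matrix (Fin d) (Fin d) ℂ) *
      (Matrix.IsHermitian.eigenvectorUnitary hH : Matrix (Fin d) (Fin d) ℂ) = 1 :=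
    (Matrix.mem_unitaryGroup_iff').mp (Matrix.IsHermitian.eigenvectorUnitary hH).2
  have hsumlam : ∑ i, lam i = d * d := by
    have h1 := congrArg Matrix.trace hH.spectral_theorem
    rw [htr, Unitary.conjStarAlgAut_apply, Matrix.trace_mul_cycle, hU', one_mul, Matrix.trace_diagonal] at h1
    simp only [Function.comp_apply] at h1
    rw [hlamdef]
    simp only [show ∀ x:ℝ, (RCLike.ofReal x:ℂ) = Complex.ofReal x from fun _ => rfl] at h1
    refine Complex.ofReal_inj.mp ?_
    push_cast
    rw [← h1]
  have hdpos : (0:ℝ) < d := by positivity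
  have hlam : ∀ i, lam i = d :=
    amgm_eq d hdpos lam (fun i => hpsd.eigenvalues_nonneg i)
      (by rw [hsumlam]) (by rw [hprodlam])
  have hfun : (RCLike.ofReal ∘ lam : Fin d → ℂ) = fun _ => (d:ℂ) :=
    funext fun i => by simp [Function.comp, hlam i]
  calc G = _ := hH.spectral_theorem
  _ = (d:ℂ) • 1 := by
      rw [hfun, ← Matrix.smul_one_eq_diagonal, Unitary.conjStarAlgAut_apply, Matrix.mul_smul, Matrix.smul_mul, mul_one, hU]

lemma backward_gram (d : ℕ) (hd : 2 ≤ d) (y : Fin d → ℝ) (c : ℝ) (σ : Equiv.Perm (Fin d))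
    (hcs : ∀ k : Fin d, y (σ k) = c + k * (π/d)) :
    Matrix.vandermonde (zf d y) * (Matrix.vandermonde (zf d y))ᴴ = (d:ℂ) • 1 := by
  have hdne : (d:ℝ) ≠ 0 := by positivity
  have hyj : ∀ j, y j = c + ((σ.symm j : ℕ) : ℝ) * (π/d) := fun j => by
    have := hcs (σ.symm j); rwa [Equiv.apply_symm_apply] at this
  ext j l
  rw [gram_entry]
  by_cases hjl : j = l
  · subst hjl
    rw [Finset.sum_congr rfl fun i _ => by rw [zf_mul_conj_self, one_pow]]
    simp [Matrix.smul_apply, Matrix.one_apply_eq]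
  · have hab : σ.symm j ≠ σ.symm l := fun h => hjl (by
      have := congrArg σ h; rwa [Equiv.apply_symm_apply, Equiv.apply_symm_apply] at this)
    set m : ℤ := ((σ.symm j : ℕ) : ℤ) - ((σ.symm l : ℕ) : ℤ) with hmdef
    have hm0 : m ≠ 0 := by
      intro h
      apply hab
      have : ((σ.symm j : ℕ) : ℤ) = ((σ.symm l : ℕ) : ℤ) := by omega
      exact Fin.ext (by exact_mod_cast this)
    have hmlt : m.natAbs < d := by
      have h1 : (σ.symm j : ℕ) < d := (σ.symm j).isLt
      have h2 : (σ.symm l : ℕ) < d := (σ.symm l).isLt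
      omega
    have hydiff : y j - y l = m * π / d := by
      rw [hyj j, hyj l, hmdef]
      push_cast
      ring
    rw [zf_mul_conj]
    set w : ℂ := Complex.exp ((2*(y j - y l):ℝ) * Complex.I) with hwdef
    have hw1 : w ≠ 1 := by
      intro h
      rw [hwdef, Complex.exp_eq_one_iff] at h
      obtain ⟨k, hk⟩ := h
      have hre : 2*(y j - y l) = k * (2*π) := by
        apply real_eq_of_mul_I
        rw [hk]
        push_cast
        ring
      rw [hydiff] at hre
      have hmk : (m:ℝ) = (k:ℝ) * d := by
        field_simp at hre
        nlinarith [Real.pi_pos, hre]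
      have hmkd : m = k * d := by exact_mod_cast hmk
      have hd' : (0:ℤ) < d := by exact_mod_cast (by omega : 0 < d)
      rcases lt_trichotomy k 0 with hk'|hk'|hk'
      · have : m ≤ -d := by
          calc m = k*d := hmkd
          _ ≤ (-1)*d := mul_le_mul_of_nonneg_right (by omega) (le_of_lt hd')
          _ = -d := by ring
        omega
      · subst hk'
        rw [zero_mul] at hmkd
        exact hm0 hmkd
      · have : (d:ℤ) ≤ m := by
          calc (d:ℤ) = 1*d := (one_mul _).symm
          _ ≤ k*d := mul_le_mul_of_nonneg_right (by omega) (le_of_lt hd')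
          _ = m := hmkd.symm
        omega
    have hwd : w ^ d = 1 := by
      rw [hwdef, ← Complex.exp_nat_mul]
      have harg : (d:ℂ) * (((2*(y j - y l):ℝ)) * Complex.I) = (m:ℂ) * (2*π*Complex.I) := by
        rw [hydiff]
        push_cast
        field_simp
      rw [harg, Complex.exp_int_mul_two_pi_mul_I]
    rw [geom_sum_eq hw1, hwd, sub_self, zero_div]
    simp [Matrix.smul_apply, Matrix.one_apply_ne hjl]
lemma forward_extract (d : ℕ) (hd : 2 ≤ d) (y : Fin d → ℝ)
    (hy : ∀ k, y k ∈ Set.Ico (0 : ℝ) π)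
    (hG : Matrix.vandermonde (zf d y) * (Matrix.vandermonde (zf d y))ᴴ = (d:ℂ) • 1) :
    ∃ c : ℝ, ∃ σ : Equiv.Perm (Fin d), ∀ k : Fin d, y (σ k) = c + k * (π / d) := by
  have hdpos : (0:ℝ) < d := by positivity
  have hdne : (d:ℝ) ≠ 0 := hdpos.ne'
  have hdC : (d:ℂ) ≠ 0 := by exact_mod_cast (show (d:ℝ) ≠ 0 from hdne)
  have hne0 : ∀ j l : Fin d, j ≠ l →
      ∑ i ∈ Finset.range d, (zf d y j * (starRingEnd ℂ) (zf d y l)) ^ i = 0 := by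
    intro j l h
    have h1 := congrFun (congrFun hG j) l
    rw [Matrix.mul_apply] at h1
    rw [← gram_entry]
    rw [Matrix.mul_apply, h1]
    simp [Matrix.smul_apply, Matrix.one_apply_ne h]
  have hyinj : ∀ j l : Fin d, j ≠ l → y j ≠ y l := by
    intro j l hjl heq
    have h0 := hne0 j l hjl
    rw [Finset.sum_congr rfl fun i _ => by
      rw [zf_mul_conj, heq, sub_self, mul_zero, Complex.ofReal_zero, zero_mul,
        Complex.exp_zero, one_pow]] at h0
    rw [Finset.sum_const, Finset.card_range, nsmul_eq_mul, mul_one] at h0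
    exact hdC h0
  set i0 : Fin d := ⟨0, by omega⟩ with hi0
  have key : ∀ j : Fin d, ∃ n : ℤ, y j - y i0 = n * (π/d) := by
    intro j
    by_cases hj : j = i0
    · exact ⟨0, by rw [hj]; simp⟩
    · have h0 := hne0 j i0 hj
      set w : ℂ := zf d y j * (starRingEnd ℂ) (zf d y i0) with hwdef
      have hwd : w ^ d = 1 := by
        have hg := geom_sum_mul w d
        rw [h0, zero_mul] at hg
        exact sub_eq_zero.mp hg.symm
      rw [hwdef, zf_mul_conj, ← Complex.exp_nat_mul, Complex.exp_eq_one_iff] at hwd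
      obtain ⟨m, hm⟩ := hwd
      refine ⟨m, ?_⟩
      have hre : (d:ℝ) * (2*(y j - y i0)) = m * (2*π) := by
        apply real_eq_of_mul_I
        rw [show ((m * (2*π) : ℝ) : ℂ) * Complex.I = (m:ℂ) * (2*↑π*Complex.I) by push_cast; ring,
          ← hm]
        push_cast
        ring
      field_simp
      linarith
  choose n hn using key
  set δ : ℝ := π/d with hδdef
  have hδ : 0 < δ := div_pos Real.pi_pos hdpos
  set t : ℤ := ⌊y i0 / δ⌋ with htdef
  set c : ℝ := y i0 - t * δ with hcdef
  have hc0 : 0 ≤ c := by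
    have h1 : (t:ℝ) ≤ y i0 / δ := Int.floor_le _
    rw [le_div_iff₀ hδ] at h1
    rw [hcdef]
    linarith
  have hc1 : c < δ := by
    have h1 : y i0 / δ < t + 1 := Int.lt_floor_add_one _
    rw [div_lt_iff₀ hδ] at h1
    rw [hcdef]
    nlinarith
  have hyj : ∀ j, y j = c + ((t + n j : ℤ) : ℝ) * δ := by
    intro j
    have h1 := hn j
    rw [hcdef]
    push_cast
    linarith [hn j]
  have hN0 : ∀ j, 0 ≤ t + n j := by
    intro j
    by_contra h
    push_neg at h
    have h2 : ((t + n j : ℤ):ℝ) ≤ -1 := by exact_mod_cast (by omega : (t + n j : ℤ) ≤ -1)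
    have h3 := (hy j).1
    rw [hyj j] at h3
    nlinarith
  have hNd : ∀ j, t + n j < d := by
    intro j
    have h3 := (hy j).2
    rw [hyj j] at h3
    have hπ : π = d * δ := by rw [hδdef]; field_simp
    by_contra h
    push_neg at h
    have h2 : (d:ℝ) ≤ ((t+n j:ℤ):ℝ) := by exact_mod_cast h
    nlinarith
  let f : Fin d → Fin d := fun j => ⟨(t + n j).toNat, by
    have := hN0 j; have := hNd j; omega⟩
  have hfval : ∀ j, ((f j : Fin d) : ℕ) = ((t + n j : ℤ) : ℝ) ∧ True := fun j => ⟨by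
    show (((t + n j).toNat : ℕ) : ℝ) = ((t + n j : ℤ) : ℝ)
    have := Int.toNat_of_nonneg (hN0 j)
    exact_mod_cast congrArg (Int.cast : ℤ → ℝ) this, trivial⟩
  have hfinj : Function.Injective f := by
    intro a b hab
    by_contra hne
    apply hyinj a b hne
    rw [hyj a, hyj b, ← (hfval a).1, ← (hfval b).1, hab]
  have hbij := Finite.injective_iff_bijective.mp hfinj
  refine ⟨c, (Equiv.ofBijective f hbij).symm, fun k => ?_⟩
  have hk : f ((Equiv.ofBijective f hbij).symm k) = k :=
    Equiv.ofBijective_apply_symm_apply f hbij k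
  rw [hyj ((Equiv.ofBijective f hbij).symm k), ← (hfval ((Equiv.ofBijective f hbij).symm k)).1,
    hk]

theorem prod_sin_sq_eq_iff (d : ℕ) (hd : 2 ≤ d) (y : Fin d → ℝ)
    (hy : ∀ k, y k ∈ Set.Ico (0 : ℝ) π) :
    (∏ p ∈ Finset.univ.filter (fun p : Fin d × Fin d => p.1 < p.2),
        Real.sin (y p.1 - y p.2) ^ 2 = (2 : ℝ) ^ (-(d * (d - 1) : ℤ)) * d ^ d) ↔
      ∃ c : ℝ, ∃ σ : Equiv.Perm (Fin d), ∀ k : Fin d, y (σ k) = c + k * (π / d) := by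
  have hA := lemA d (by omega) y
  have h2E : (0:ℝ) < 2 ^ (d*(d-1)) := by positivity
  have hEcast : ((2:ℝ)) ^ (-(↑d * (↑d - 1) : ℤ)) = ((2:ℝ) ^ (d*(d-1) : ℕ))⁻¹ := by
    rw [show (-(↑d * (↑d - 1)) : ℤ) = -((d*(d-1) : ℕ) : ℤ) by
      push_cast [Nat.cast_sub (by omega : 1 ≤ d)]; ring]
    rw [_root_.zpow_neg, zpow_natCast]
  have hiff : (∏ p ∈ Finset.univ.filter (fun p : Fin d × Fin d => p.1 < p.2),
        Real.sin (y p.1 - y p.2) ^ 2 = (2 : ℝ) ^ (-(d * (d - 1) : ℤ)) * d ^ d) ↔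
      ‖(Matrix.vandermonde (zf d y)).det‖ ^ 2 = (d:ℝ) ^ d := by
    rw [hEcast]
    constructor
    · intro h
      rw [hA, h, ← mul_assoc, mul_inv_cancel₀ h2E.ne', one_mul]
    · intro h
      rw [h] at hA
      field_simp
      linarith [hA]
  rw [hiff]
  constructor
  · intro habs
    exact forward_extract d hd y hy (forward_gram hd (zf d y) (zf_abs d y) habs)
  · rintro ⟨c, σ, hcs⟩
    exact absdet_of_gram (zf d y) (backward_gram d hd y c σ hcs)
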